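/- Let x be a unit right eigenvector of A·Diag(d) for eigenvalue λ₁ = λ_max(A Diag(d)), where A ∈ S^n_{++} and d > 0. Then the vector g = (λ₁/(xᵀ(d∘x)))·(x∘x) is a Fenchel subgradient of the convex function y ↦ λ_max(A Diag(y)) at d: for all y ∈ ℝ^n, ⟨g, y − d⟩ ≤ λ_max(A Diag(y)) − λ_max(A Diag(d)). -/

import Mathlib

open Matrix

lemma dot_trans {n : ℕ} (B : Matrix (Fin n) (Fin n) ℝ) (v z : Fin n → ℝ) :
    v ⬝ᵥ B *ᵥ z = (Bᵀ *ᵥ v) ⬝ᵥ z := by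
  rw [Matrix.dotProduct_mulVec, Matrix.mulVec_transpose]

lemma rayleigh_aux {n : ℕ} {M : Matrix (Fin n) (Fin n) ℝ} (hM : M.IsHermitian)
    (v : Fin n → ℝ) : v ⬝ᵥ M *ᵥ v ≤ sSup (spectrum ℝ M) * (v ⬝ᵥ v) := by
  have hbdd : BddAbove (spectrum ℝ M) := (Matrix.finite_real_spectrum (A := M)).bddAbove
  have hle : ∀ i, hM.eigenvalues i ≤ sSup (spectrum ℝ M) := fun i =>
    le_csSup hbdd (hM.eigenvalues_mem_spectrum_real i)
  set U : Matrix (Fin n) (Fin n) ℝ := (hM.eigenvectorUnitary : Matrix (Fin n) (Fin n) ℝ) with hU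
  have hstar : star U = Uᵀ := by
    ext i j; simp [Matrix.star_eq_conjTranspose, Matrix.conjTranspose_apply]
  have hUU : U * star U = 1 := (Matrix.mem_unitaryGroup_iff).mp hM.eigenvectorUnitary.2
  set w : Fin n → ℝ := Uᵀ *ᵥ v with hw
  have key1 : v ⬝ᵥ M *ᵥ v = w ⬝ᵥ (Matrix.diagonal hM.eigenvalues *ᵥ w) := by
    conv_lhs => rw [hM.spectral_theorem, Unitary.conjStarAlgAut_apply]
    rw [← Matrix.mulVec_mulVec, ← Matrix.mulVec_mulVec, dot_trans, hstar]
    have hco : (RCLike.ofReal ∘ hM.eigenvalues : Fin n → ℝ) = hM.eigenvalues := by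
      ext i; simp [RCLike.ofReal_real_eq_id]
    rw [hco]
  have key2 : v ⬝ᵥ v = w ⬝ᵥ w := by
    rw [hw, dot_trans, Matrix.transpose_transpose, Matrix.mulVec_mulVec, ← hstar, hUU,
      Matrix.one_mulVec]
  rw [key1, key2]
  simp only [dotProduct, Matrix.mulVec_diagonal, Finset.mul_sum]
  apply Finset.sum_le_sum
  intro i _
  have h2 : 0 ≤ w i * w i := mul_self_nonneg _
  calc w i * (hM.eigenvalues i * w i) = hM.eigenvalues i * (w i * w i) := by ring
    _ ≤ sSup (spectrum ℝ M) * (w i * w i) := mul_le_mul_of_nonneg_right (hle i) h2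

/-- Fenchel subgradient of `λ_max(A Diag(·))`.  Let `A ≻ 0`, `d > 0`, and let `x` be a
unit right eigenvector of `A Diag(d)` for `λ₁ = λ_max(A Diag d)`.  Then
`g = (λ₁/(xᵀ(d ∘ x))) · (x ∘ x)` satisfies
`⟨g, y − d⟩ ≤ λ_max(A Diag y) − λ_max(A Diag d)` for all `y ∈ ℝ^n`. -/
theorem subgradient_lamMax (n : ℕ)
    (A : Matrix (Fin n) (Fin n) ℝ) (hA : A.PosDef)
    (d : Fin n → ℝ) (hd : ∀ i, 0 < d i)
    (lam1 : ℝ) (hlam1 : lam1 = sSup (spectrum ℝ (A * Matrix.diagonal d)))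
    (x : Fin n → ℝ) (hxunit : ∑ i, x i * x i = 1)
    (heig : (A * Matrix.diagonal d).mulVec x = lam1 • x) :
    ∀ y : Fin n → ℝ,
      ∑ i, (lam1 / (∑ j, x j * (d j * x j)) * (x i * x i)) * (y i - d i) ≤
        sSup (spectrum ℝ (A * Matrix.diagonal y)) -
          sSup (spectrum ℝ (A * Matrix.diagonal d)) := by
  intro y
  classical
  open scoped MatrixOrder in set S := CFC.sqrt A with hSdef
  have hS : S * S = A := by open scoped MatrixOrder in exact CFC.sqrt_mul_sqrt_self A hA.posSemidef.nonneg
  have hSH : S.IsHermitian := by open scoped MatrixOrder in exact (CFC.sqrt_nonneg A).posSemidef.1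
  have hdetS : S.det ≠ 0 := by
    intro h
    have hA0 : A.det = 0 := by rw [← hS, Matrix.det_mul, h, mul_zero]
    exact hA.det_pos.ne' hA0
  have hdetSu : IsUnit S.det := isUnit_iff_ne_zero.2 hdetS
  have hSinv : S * S⁻¹ = 1 := Matrix.mul_nonsing_inv S hdetSu
  have hdetA : IsUnit A.det := isUnit_iff_ne_zero.2 hA.det_pos.ne'
  have hAinv : A⁻¹ * A = 1 := Matrix.nonsing_inv_mul A hdetA
  have hSt : Sᵀ = S := by
    conv_rhs => rw [← hSH]
    ext i j
    simp [Matrix.conjTranspose_apply]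
  -- spectrum conjugation
  have hspec : ∀ z : Fin n → ℝ, spectrum ℝ (A * Matrix.diagonal z)
      = spectrum ℝ (S * Matrix.diagonal z * S) := by
    intro z
    have hU : IsUnit S := (Matrix.isUnit_iff_isUnit_det S).2 hdetSu
    have h1 : A * Matrix.diagonal z = (hU.unit : Matrix (Fin n) (Fin n) ℝ) * (S * Matrix.diagonal z * S) * ((hU.unit⁻¹ : (Matrix (Fin n) (Fin n) ℝ)ˣ) : Matrix (Fin n) (Fin n) ℝ) := by
      rw [Matrix.coe_units_inv, IsUnit.unit_spec]
      have h2 : S * (S * Matrix.diagonal z * S) * S⁻¹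
          = (S * S) * Matrix.diagonal z * (S * S⁻¹) := by
        simp only [mul_assoc]
      rw [h2, hS, hSinv, mul_one]
    rw [h1, spectrum.units_conjugate]
  -- hermitian conjugated matrices
  have hMH : ∀ z : Fin n → ℝ, (S * Matrix.diagonal z * S).IsHermitian := by
    intro z
    have h := Matrix.isHermitian_mul_mul_conjTranspose S (Matrix.isHermitian_diagonal z)
    rwa [hSH.eq] at h
  -- x ≠ 0 and positivity facts
  have hx0 : x ≠ 0 := by
    intro h
    rw [h] at hxunit
    simp at hxunit
  have hc0 : 0 < x ⬝ᵥ A⁻¹ *ᵥ x := by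
    have h := (hA.inv).re_dotProduct_pos hx0
    simpa using h
  -- eigen relation
  have hDd : Matrix.diagonal d *ᵥ x = lam1 • (A⁻¹ *ᵥ x) := by
    have h1 : A⁻¹ *ᵥ ((A * Matrix.diagonal d) *ᵥ x) = A⁻¹ *ᵥ (lam1 • x) := by rw [heig]
    rw [Matrix.mulVec_mulVec, ← mul_assoc, hAinv, one_mul, Matrix.mulVec_smul] at h1
    exact h1
  have hp : x ⬝ᵥ (Matrix.diagonal d *ᵥ x) = lam1 * (x ⬝ᵥ A⁻¹ *ᵥ x) := by
    rw [hDd, dotProduct_smul, smul_eq_mul]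
  have hsum : ∀ z : Fin n → ℝ, (∑ j, x j * (z j * x j)) = x ⬝ᵥ (Matrix.diagonal z *ᵥ x) := by
    intro z
    simp [dotProduct, Matrix.mulVec_diagonal]
  have hppos : 0 < ∑ j, x j * (d j * x j) := by
    obtain ⟨i, hi⟩ := Function.ne_iff.mp hx0
    apply Finset.sum_pos'
    · intro j _
      have : x j * (d j * x j) = d j * (x j * x j) := by ring
      rw [this]
      exact mul_nonneg (hd j).le (mul_self_nonneg _)
    · refine ⟨i, Finset.mem_univ i, ?_⟩
      have hxx : 0 < x i * x i := by
        rcases lt_or_gt_of_ne (show x i ≠ 0 by simpa using hi) with h | h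
        · exact mul_pos_of_neg_of_neg h h
        · exact mul_pos h h
      have : x i * (d i * x i) = d i * (x i * x i) := by ring
      rw [this]
      exact mul_pos (hd i) hxx
  have hpc : (∑ j, x j * (d j * x j)) = lam1 * (x ⬝ᵥ A⁻¹ *ᵥ x) := by rw [hsum d, hp]
  have hlam1pos : 0 < lam1 := by nlinarith [hppos, hpc, hc0]
  -- Rayleigh
  set v : Fin n → ℝ := S⁻¹ *ᵥ x with hv
  have hSv : S *ᵥ v = x := by
    rw [hv, Matrix.mulVec_mulVec, hSinv, Matrix.one_mulVec]
  have hq : ∀ z : Fin n → ℝ,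
      v ⬝ᵥ ((S * Matrix.diagonal z * S) *ᵥ v) = x ⬝ᵥ (Matrix.diagonal z *ᵥ x) := by
    intro z
    rw [← Matrix.mulVec_mulVec, ← Matrix.mulVec_mulVec, dot_trans, hSt, hSv]
  have hvv : v ⬝ᵥ v = x ⬝ᵥ A⁻¹ *ᵥ x := by
    have h2 : S⁻¹ * S⁻¹ = A⁻¹ := by rw [← Matrix.mul_inv_rev, hS]
    rw [hv, dot_trans, Matrix.transpose_nonsing_inv, hSt, Matrix.mulVec_mulVec, h2,
      dotProduct_comm]
  have hray : x ⬝ᵥ (Matrix.diagonal y *ᵥ x)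
      ≤ sSup (spectrum ℝ (A * Matrix.diagonal y)) * (x ⬝ᵥ A⁻¹ *ᵥ x) := by
    rw [hspec y, ← hvv, ← hq y]
    exact rayleigh_aux (hMH y) v
  -- final arithmetic
  rw [← hlam1]
  set p := ∑ j, x j * (d j * x j) with hpdef
  set c0 := x ⬝ᵥ A⁻¹ *ᵥ x with hc0def
  set s := sSup (spectrum ℝ (A * Matrix.diagonal y)) with hsdef
  set q := ∑ i, x i * (y i * x i) with hqdef
  have hqray : q ≤ s * c0 := by rw [hqdef, hsum y]; exact hray
  have hL : (∑ i, (lam1 / p * (x i * x i)) * (y i - d i))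
      = (lam1 / p) * q - (lam1 / p) * p := by
    rw [hqdef, hpdef, Finset.mul_sum, Finset.mul_sum, ← Finset.sum_sub_distrib]
    apply Finset.sum_congr rfl
    intro i _
    ring
  rw [hL]
  have ha : 0 ≤ lam1 / p := div_nonneg hlam1pos.le hppos.le
  have hlp : (lam1 / p) * c0 = 1 := by
    rw [hpc]
    field_simp
  have h1 : (lam1 / p) * q ≤ (lam1 / p) * (s * c0) := mul_le_mul_of_nonneg_left hqray ha
  have h2 : (lam1 / p) * (s * c0) = s := by
    rw [show (lam1 / p) * (s * c0) = s * ((lam1 / p) * c0) by ring, hlp, mul_one]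
  have h3 : (lam1 / p) * p = lam1 := div_mul_cancel₀ lam1 hppos.ne'
  linarith
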